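/- There is no ultrafilter p on ℕ, other than the principal ultrafilters, and no ultrafilter q on ℕ, such that E₁(q, p) = p when p is nonprincipal. More precisely: for every ultrafilter q on ℕ and every nonprincipal ultrafilter p on ℕ, E₁(q, p) ≠ p. In particular there is no nonprincipal E₁-idempotent (no nonprincipal p with E₁(p,p) = p). This may be proved assuming the existence of a 4-coloring ℕ = A₁ ∪ A₂ ∪ A₃ ∪ A₄ with no i and no a, b > 1 satisfying log₂ a ≤ b and both b ∈ A_i and a^b ∈ A_i. -/

import Mathlib

/-- `E₁(p,q)`: `A ∈ E₁(p,q) ↔ {x | {y | x^y ∈ A} ∈ q} ∈ p`. -/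
def E1 (p q : Ultrafilter ℕ) : Ultrafilter ℕ := p.bind fun n => q.map fun m => n ^ m

lemma mem_E1 {p q : Ultrafilter ℕ} {s : Set ℕ} :
    s ∈ E1 p q ↔ {x | {y | x ^ y ∈ s} ∈ q} ∈ p := Iff.rfl

lemma E1_ne (hcol : ∃ A : Fin 4 → Set ℕ, (∀ n : ℕ, ∃ i, n ∈ A i) ∧
      ¬ ∃ (i : Fin 4) (a b : ℕ), 1 < a ∧ 1 < b ∧ Real.logb 2 (a : ℝ) ≤ (b : ℝ) ∧
        b ∈ A i ∧ a ^ b ∈ A i)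
    (q p : Ultrafilter ℕ) (hp : ∀ a : ℕ, p ≠ pure a) : E1 q p ≠ p := by
  obtain ⟨A, hAcov, hAno⟩ := hcol
  have hcof : (p : Filter ℕ) ≤ Filter.cofinite := by
    rcases p.le_cofinite_or_eq_pure with h | ⟨a, ha⟩
    · exact h
    · exact absurd ha (hp a)
  intro heq
  -- find a color in p
  have hunion : (⋃ i ∈ (Set.univ : Set (Fin 4)), A i) ∈ p := by
    have : (⋃ i ∈ (Set.univ : Set (Fin 4)), A i) = Set.univ := by
      ext n; simpa using hAcov n
    rw [this]; exact Filter.univ_mem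
  obtain ⟨i, -, hAi⟩ := (Ultrafilter.finite_biUnion_mem_iff Set.finite_univ).mp hunion
  -- the color restricted to ≥ 2
  have h2 : {n : ℕ | 2 ≤ n} ∈ p := by
    apply hcof
    have : {n : ℕ | 2 ≤ n}ᶜ ⊆ Set.Iio 2 := by intro n; simp [Set.mem_Iio]
    exact Filter.mem_cofinite.mpr ((Set.finite_Iio 2).subset this)
  have hS : (A i ∩ {n : ℕ | 2 ≤ n}) ∈ p := Filter.inter_mem hAi h2
  have hE : {x : ℕ | {y : ℕ | x ^ y ∈ A i ∩ {n : ℕ | 2 ≤ n}} ∈ p} ∈ q := by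
    rw [← heq] at hS; exact hS
  obtain ⟨a, ha⟩ := q.nonempty_of_mem hE
  have hB : {y : ℕ | a ^ y ∈ A i ∩ {n : ℕ | 2 ≤ n}} ∈ p := ha
  -- a ≥ 2
  have ha2 : 2 ≤ a := by
    by_contra hlt
    push_neg at hlt
    obtain ⟨y, hy⟩ := p.nonempty_of_mem (Filter.inter_mem hB h2)
    have h1 : 2 ≤ a ^ y := hy.1.2
    have : a ^ y ≤ 1 ^ y := Nat.pow_le_pow_left (by omega) y
    simp at this; omega
  -- b large enough
  have hbig : {y : ℕ | a ≤ y ∧ 2 ≤ y} ∈ p := by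
    apply hcof
    have : {y : ℕ | a ≤ y ∧ 2 ≤ y}ᶜ ⊆ Set.Iio (a + 2) := by
      intro n; simp [Set.mem_Iio]; omega
    exact Filter.mem_cofinite.mpr ((Set.finite_Iio (a + 2)).subset this)
  obtain ⟨b, ⟨hbB, hbA⟩, hba, hb2⟩ :=
    p.nonempty_of_mem (Filter.inter_mem (Filter.inter_mem hB hAi) hbig)
  refine hAno ⟨i, a, b, by omega, by omega, ?_, hbA, hbB.1⟩
  -- logb 2 a ≤ b since a < 2^a ≤ 2^b
  have hlt : (a : ℝ) ≤ (2 : ℝ) ^ (b : ℝ) := by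
    rw [show ((2:ℝ) ^ (b:ℝ)) = ((2 ^ b : ℕ) : ℝ) by
      rw [Real.rpow_natCast]; push_cast; ring]
    exact_mod_cast le_of_lt (lt_of_lt_of_le (Nat.lt_two_pow_self (n := a)) (Nat.pow_le_pow_right (by norm_num) hba))
  have ha0 : (0 : ℝ) < a := by positivity
  exact (Real.logb_le_iff_le_rpow (by norm_num) ha0).mpr hlt

theorem stmt18
    (hcol : ∃ A : Fin 4 → Set ℕ, (∀ n : ℕ, ∃ i, n ∈ A i) ∧
      ¬ ∃ (i : Fin 4) (a b : ℕ), 1 < a ∧ 1 < b ∧ Real.logb 2 (a : ℝ) ≤ (b : ℝ) ∧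
        b ∈ A i ∧ a ^ b ∈ A i) :
    (∀ (q p : Ultrafilter ℕ), (∀ a : ℕ, p ≠ pure a) → E1 q p ≠ p) ∧
      ¬ ∃ p : Ultrafilter ℕ, (∀ a : ℕ, p ≠ pure a) ∧ E1 p p = p := by
  refine ⟨E1_ne hcol, ?_⟩
  rintro ⟨p, hp, hE⟩
  exact E1_ne hcol p p hp hE
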